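/- arXiv:2102.08544 — 7 statements merged into one kernel-verified Lean document; each statement's English description precedes it below -/
import Mathlib

section
/- Let u and t^P be positive real numbers, let p = 1 − e^{-u t^P} and t^I = 1/u − (e^{-u t^P}/(1 − e^{-u t^P}))·t^P. Then the series ∑_{n=0}^∞ p^n (1−p) n t^I converges, and ∑_{n=0}^∞ p^n (1−p) n t^I + t^P = (e^{u t^P} − 1)/u. -/
open Real Filter

theorem statement4 (u tP : ℝ) (hu : 0 < u) (htP : 0 < tP)
    (p tI : ℝ) (hp : p = 1 - Real.exp (-u * tP))
    (htI : tI = 1 / u - (Real.exp (-u * tP) / (1 - Real.exp (-u * tP))) * tP) :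
    Summable (fun n : ℕ => p ^ n * (1 - p) * (n : ℝ) * tI) ∧
      (∑' n : ℕ, p ^ n * (1 - p) * (n : ℝ) * tI) + tP = (Real.exp (u * tP) - 1) / u := by
  set e := Real.exp (-u * tP) with he
  have he0 : 0 < e := Real.exp_pos _
  have he1 : e < 1 := by
    rw [he]
    apply Real.exp_lt_one_iff.mpr
    nlinarith
  have hp0 : 0 < p := by rw [hp]; linarith
  have hp1 : p < 1 := by rw [hp]; linarith
  have hnorm : ‖p‖ < 1 := by rw [Real.norm_eq_abs, abs_lt]; constructor <;> linarith
  have hs : Summable (fun n : ℕ => (n : ℝ) * p ^ n) := by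
    simpa using summable_pow_mul_geometric_of_norm_lt_one 1 hnorm
  have heq : (fun n : ℕ => p ^ n * (1 - p) * (n : ℝ) * tI)
      = fun n : ℕ => ((n : ℝ) * p ^ n) * ((1 - p) * tI) := by
    funext n; ring
  constructor
  · rw [heq]; exact hs.mul_right _
  · have htsum : (∑' n : ℕ, p ^ n * (1 - p) * (n : ℝ) * tI)
        = (p / (1 - p) ^ 2) * ((1 - p) * tI) := by
      rw [heq, tsum_mul_right, tsum_coe_mul_geometric_of_norm_lt_one hnorm]
    rw [htsum, hp, htI]
    have hee : Real.exp (u * tP) * e = 1 := by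
      rw [he, ← Real.exp_add]; simp
    have hne : e ≠ 0 := ne_of_gt he0
    have hne1 : 1 - e ≠ 0 := by linarith
    have hx : Real.exp (u * tP) = 1 / e := by
      field_simp at hee ⊢; linarith [hee]
    rw [hx]
    field_simp
    linear_combination (1 - e * u * tP - e) * mul_inv_cancel₀ hne
end

section
/- Let u, v, λ, t^P be positive real numbers. If real numbers p and q satisfy the system p = ∫_{t^P}^∞ u e^{-ut} dt + q·∫₀^{t^P} u e^{-ut} dt and q = p·∫₀^∞ (∫_s^∞ λ e^{-λt} dt)·v e^{-vs} ds, then p = (v+λ)e^{-u t^P}/(λ + v e^{-u t^P}) and q = v e^{-u t^P}/(λ + v e^{-u t^P}). -/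
open Real MeasureTheory Set Filter Topology

lemma intIoi_exp (b c : ℝ) (hb : 0 < b) :
    (∫ x in Ioi c, b * Real.exp (-b * x)) = Real.exp (-b * c) := by
  have hderiv : ∀ x ∈ Ici c, HasDerivAt (fun x : ℝ => -Real.exp (-b * x))
      (b * Real.exp (-b * x)) x := by
    intro x _
    have h := (((hasDerivAt_id x).const_mul (-b)).exp).neg
    simp only [id] at h
    exact h.congr_deriv (by ring)
  have hint : IntegrableOn (fun x => b * Real.exp (-b * x)) (Ioi c) :=
    (exp_neg_integrableOn_Ioi c hb).const_mul b
  have htend : Tendsto (fun x : ℝ => -Real.exp (-b * x)) atTop (nhds 0) := by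
    have h1 : Tendsto (fun x : ℝ => Real.exp (-(b * x))) atTop (nhds 0) :=
      Real.tendsto_exp_neg_atTop_nhds_zero.comp (tendsto_id.const_mul_atTop hb)
    have : Tendsto (fun x : ℝ => Real.exp (-b * x)) atTop (nhds 0) := by
      simpa [neg_mul] using h1
    simpa using this.neg
  have := integral_Ioi_of_hasDerivAt_of_tendsto' hderiv hint htend
  simpa using this

lemma intInterval_exp (b c : ℝ) :
    (∫ x in (0:ℝ)..c, b * Real.exp (-b * x)) = 1 - Real.exp (-b * c) := by
  have hderiv : ∀ x ∈ Set.uIcc (0:ℝ) c, HasDerivAt (fun x : ℝ => -Real.exp (-b * x))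
      (b * Real.exp (-b * x)) x := by
    intro x _
    have h := (((hasDerivAt_id x).const_mul (-b)).exp).neg
    simp only [id] at h
    exact h.congr_deriv (by ring)
  rw [intervalIntegral.integral_eq_sub_of_hasDerivAt hderiv]
  · simp
    ring
  · exact (Continuous.intervalIntegrable (by continuity) _ _)

theorem statement6 (u v lam tP : ℝ) (hu : 0 < u) (hv : 0 < v) (hlam : 0 < lam)
    (htP : 0 < tP) (p q : ℝ)
    (hp : p = (∫ t in Ioi tP, u * Real.exp (-u * t))
        + q * ∫ t in (0:ℝ)..tP, u * Real.exp (-u * t))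
    (hq : q = p * ∫ s in Ioi (0:ℝ),
        (∫ t in Ioi s, lam * Real.exp (-lam * t)) * (v * Real.exp (-v * s))) :
    p = (v + lam) * Real.exp (-u * tP) / (lam + v * Real.exp (-u * tP)) ∧
      q = v * Real.exp (-u * tP) / (lam + v * Real.exp (-u * tP)) := by
  have hlv : (lam + v) ≠ 0 := by positivity
  rw [intIoi_exp u tP hu, intInterval_exp u tP] at hp
  have hinner : ∀ s ∈ Ioi (0:ℝ),
      (∫ t in Ioi s, lam * Real.exp (-lam * t)) * (v * Real.exp (-v * s))
      = (v / (lam + v)) * ((lam + v) * Real.exp (-(lam + v) * s)) := by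
    intro s _
    rw [intIoi_exp lam s hlam]
    have he : Real.exp (-lam * s) * Real.exp (-v * s) = Real.exp (-(lam + v) * s) := by
      rw [← Real.exp_add]; ring_nf
    rw [show (v / (lam + v)) * ((lam + v) * Real.exp (-(lam + v) * s))
        = v * Real.exp (-(lam + v) * s) by field_simp]
    rw [← he]; ring
  rw [setIntegral_congr_fun measurableSet_Ioi hinner, MeasureTheory.integral_const_mul,
    intIoi_exp (lam + v) 0 (by linarith)] at hq
  simp only [mul_zero, Real.exp_zero, mul_one] at hq
  set E := Real.exp (-u * tP) with hE
  have hEpos : 0 < E := Real.exp_pos _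
  have hden : (0:ℝ) < lam + v * E := by positivity
  -- hq : q = p * (v / (lam + v)) ; hp : p = E + q * (1 - E)
  have hpval : p = (v + lam) * E / (lam + v * E) := by
    field_simp at hq ⊢
    nlinarith [hp, hq, hEpos, hden]
  refine ⟨hpval, ?_⟩
  rw [hq, hpval]
  field_simp
  ring
end

section
/- Fix positive real numbers k, λ and t^P, and for u > 0 set v = k·u, h = 1/u + 1/v, g = 1/λ + u/(v(u+v+λ)) − h, q = 1/(uv) − (v+λ)/(v(u+v+λ)²), and l = v/u + (u+v)/(u+v+λ). Define the average AoI Δ̄(u) = ( h²e^{2u t^P} + (h(g − t^P) − 1/(uv))e^{u t^P} + g/λ + q )/( h e^{u t^P} + g ) + ( (l + λ t^P)e^{u t^P} − l + u/(u+v+λ) )/( λ e^{u t^P} + v ). Then Δ̄(u) tends to +∞ as u tends to 0 from the right. -/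
open Real Filter Set

noncomputable def aoiBarU (k lam tP u : ℝ) : ℝ :=
  let v := k * u
  let h := 1 / u + 1 / v
  let g := 1 / lam + u / (v * (u + v + lam)) - h
  let q := 1 / (u * v) - (v + lam) / (v * (u + v + lam) ^ 2)
  let l := v / u + (u + v) / (u + v + lam)
  (h ^ 2 * Real.exp (2 * u * tP) + (h * (g - tP) - 1 / (u * v)) * Real.exp (u * tP)
      + g / lam + q) / (h * Real.exp (u * tP) + g)
    + ((l + lam * tP) * Real.exp (u * tP) - l + u / (u + v + lam))
      / (lam * Real.exp (u * tP) + v)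

noncomputable def aoiPhi (tP u : ℝ) : ℝ := (Real.exp (u * tP) - 1) / u

noncomputable def aoiA (k lam tP u : ℝ) : ℝ :=
  (1 + 1/k)^2 * Real.exp (u * tP) * aoiPhi tP u
    + (1 + 1/k) * ((1/lam + 1/(k * (u + k*u + lam))) - tP) * Real.exp (u * tP)
    - aoiPhi tP u / k - (k*u + lam) / (k * (u + k*u + lam)^2)
    + u * (1/lam + 1/(k * (u + k*u + lam))) / lam - (1 + 1/k) / lam

noncomputable def aoiD (k lam tP u : ℝ) : ℝ :=
  (1 + 1/k) * aoiPhi tP u + (1/lam + 1/(k * (u + k*u + lam)))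

noncomputable def aoiS (k lam tP u : ℝ) : ℝ :=
  ((k + (u + k*u)/(u + k*u + lam) + lam * tP) * Real.exp (u * tP)
      - (k + (u + k*u)/(u + k*u + lam)) + u/(u + k*u + lam))
    / (lam * Real.exp (u * tP) + k*u)

lemma aoi_decomp (k lam tP : ℝ) (hk : 0 < k) (hlam : 0 < lam) (htP : 0 < tP)
    {u : ℝ} (hu : 0 < u) :
    aoiBarU k lam tP u = (aoiA k lam tP u / aoiD k lam tP u) * u⁻¹ + aoiS k lam tP u := by
  have hu' : u ≠ 0 := hu.ne'
  have hk' : k ≠ 0 := hk.ne'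
  have hlam' : lam ≠ 0 := hlam.ne'
  have hs : (0:ℝ) < u + k*u + lam := by positivity
  have hs' : u + k*u + lam ≠ 0 := hs.ne'
  have hE1 : 1 < Real.exp (u * tP) := by
    rw [show (1:ℝ) = Real.exp 0 from (Real.exp_zero).symm]
    exact Real.exp_lt_exp.mpr (by positivity)
  have hφ : 0 < aoiPhi tP u := div_pos (by linarith) hu
  have hD : 0 < aoiD k lam tP u := by
    have h1 : 0 < (1 + 1/k) * aoiPhi tP u := by positivity
    have h2 : 0 < 1/lam + 1/(k * (u + k*u + lam)) := by positivity
    unfold aoiD; linarith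
  have h2exp : Real.exp (2 * u * tP) = Real.exp (u * tP) * Real.exp (u * tP) := by
    rw [← Real.exp_add]; ring_nf
  have hden1 : (1/u + 1/(k*u)) * Real.exp (u * tP)
      + (1/lam + u/((k*u) * (u + k*u + lam)) - (1/u + 1/(k*u))) = aoiD k lam tP u := by
    unfold aoiD aoiPhi; field_simp; ring
  have hnum : (1/u + 1/(k*u)) ^ 2 * (Real.exp (u * tP) * Real.exp (u * tP))
      + ((1/u + 1/(k*u)) * ((1/lam + u/((k*u) * (u + k*u + lam)) - (1/u + 1/(k*u))) - tP)
          - 1/(u * (k*u))) * Real.exp (u * tP)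
      + (1/lam + u/((k*u) * (u + k*u + lam)) - (1/u + 1/(k*u))) / lam
      + (1/(u * (k*u)) - (k*u + lam)/((k*u) * (u + k*u + lam)^2))
      = aoiA k lam tP u / u := by
    unfold aoiA aoiPhi
    rw [eq_div_iff hu']
    field_simp
    ring
  have hl : k * u / u = k := by field_simp
  simp only [aoiBarU]
  rw [h2exp, hden1, hnum, hl]
  rw [div_right_comm, div_eq_mul_inv (aoiA k lam tP u / aoiD k lam tP u)]
  rfl

theorem statement7 (k lam tP : ℝ) (hk : 0 < k) (hlam : 0 < lam) (htP : 0 < tP) :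
    Tendsto (aoiBarU k lam tP) (nhdsWithin 0 (Ioi 0)) atTop := by
  have hk' : k ≠ 0 := hk.ne'
  have hlam' : lam ≠ 0 := hlam.ne'
  -- limit of the difference quotient of exp
  have hderiv : HasDerivAt (fun u : ℝ => Real.exp (u * tP)) tP 0 := by
    have h1 : HasDerivAt (fun u : ℝ => u * tP) tP 0 := by
      simpa using (hasDerivAt_id (0:ℝ)).mul_const tP
    have := (Real.hasDerivAt_exp (0 * tP)).comp 0 h1
    simpa [Function.comp_def] using this
  have hφ : Tendsto (aoiPhi tP) (nhdsWithin 0 (Ioi 0)) (nhds tP) := by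
    have h := hasDerivAt_iff_tendsto_slope.mp hderiv
    have h2 : Tendsto (slope (fun u : ℝ => Real.exp (u * tP)) 0)
        (nhdsWithin 0 (Ioi 0)) (nhds tP) :=
      h.mono_left (nhdsWithin_mono 0 (fun x hx => ne_of_gt hx))
    refine h2.congr (fun u => ?_)
    simp [slope_def_field, aoiPhi]
  have hu0 : Tendsto (fun u : ℝ => u) (nhdsWithin (0:ℝ) (Ioi 0)) (nhds 0) :=
    tendsto_id.mono_left nhdsWithin_le_nhds
  have hexp : Tendsto (fun u : ℝ => Real.exp (u * tP)) (nhdsWithin (0:ℝ) (Ioi 0)) (nhds 1) := by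
    have h : Tendsto (fun u : ℝ => Real.exp (u * tP)) (nhds 0) (nhds (Real.exp (0 * tP))) :=
      ((Real.continuous_exp.comp (continuous_id.mul continuous_const)).tendsto 0)
    simpa using h.mono_left nhdsWithin_le_nhds
  have hsa : Tendsto (fun u : ℝ => u + k*u + lam) (nhdsWithin (0:ℝ) (Ioi 0)) (nhds lam) := by
    have h : Tendsto (fun u : ℝ => u + k*u + lam) (nhds 0) (nhds (0 + k*0 + lam)) :=
      ((continuous_id.add (continuous_const.mul continuous_id)).add continuous_const).tendsto 0
    simpa using h.mono_left nhdsWithin_le_nhds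
  have ha : Tendsto (fun u : ℝ => 1/lam + 1/(k * (u + k*u + lam)))
      (nhdsWithin (0:ℝ) (Ioi 0)) (nhds (1/lam + 1/(k * lam))) :=
    tendsto_const_nhds.add
      (tendsto_const_nhds.div (tendsto_const_nhds.mul hsa) (by positivity))
  have hr : Tendsto (fun u : ℝ => (k*u + lam) / (k * (u + k*u + lam)^2))
      (nhdsWithin (0:ℝ) (Ioi 0)) (nhds ((k*0 + lam) / (k * lam^2))) := by
    refine Tendsto.div ?_ (tendsto_const_nhds.mul (hsa.pow 2)) (by positivity)
    simpa using (tendsto_const_nhds.mul hu0).add (tendsto_const_nhds : Tendsto (fun _ : ℝ => lam) _ (nhds lam))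
  -- limit of A
  have hA : Tendsto (aoiA k lam tP) (nhdsWithin (0:ℝ) (Ioi 0))
      (nhds ((1 + 1/k)^2 * 1 * tP + (1 + 1/k) * ((1/lam + 1/(k * lam)) - tP) * 1
        - tP / k - (k*0 + lam) / (k * lam^2) + 0 * (1/lam + 1/(k * lam)) / lam - (1 + 1/k)/lam)) := by
    unfold aoiA
    exact ((((((tendsto_const_nhds.mul hexp).mul hφ).add
      ((tendsto_const_nhds.mul (ha.sub tendsto_const_nhds)).mul hexp)).sub
      (hφ.div_const k)).sub hr).add ((hu0.mul ha).div_const lam)).sub tendsto_const_nhds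
  -- limit of D
  have hDlim : Tendsto (aoiD k lam tP) (nhdsWithin (0:ℝ) (Ioi 0))
      (nhds ((1 + 1/k) * tP + (1/lam + 1/(k * lam)))) := by
    unfold aoiD
    exact (tendsto_const_nhds.mul hφ).add ha
  have hCDpos : (0:ℝ) < (1 + 1/k) * tP + (1/lam + 1/(k * lam)) := by positivity
  have hCApos : (0:ℝ) < (1 + 1/k)^2 * 1 * tP + (1 + 1/k) * ((1/lam + 1/(k * lam)) - tP) * 1
      - tP / k - (k*0 + lam) / (k * lam^2) + 0 * (1/lam + 1/(k * lam)) / lam - (1 + 1/k)/lam := by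
    have h : (1 + 1/k)^2 * 1 * tP + (1 + 1/k) * ((1/lam + 1/(k * lam)) - tP) * 1
        - tP / k - (k*0 + lam) / (k * lam^2) + 0 * (1/lam + 1/(k * lam)) / lam - (1 + 1/k)/lam
        = (tP + 1/lam) / k^2 := by
      field_simp
      ring
    rw [h]; positivity
  have hfrac : Tendsto (fun u => aoiA k lam tP u / aoiD k lam tP u * u⁻¹)
      (nhdsWithin (0:ℝ) (Ioi 0)) atTop :=
    Tendsto.pos_mul_atTop (div_pos hCApos hCDpos) (hA.div hDlim hCDpos.ne') tendsto_inv_nhdsGT_zero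
  -- limit of S
  have hlten : Tendsto (fun u : ℝ => k + (u + k*u)/(u + k*u + lam))
      (nhdsWithin (0:ℝ) (Ioi 0)) (nhds (k + (0 + k*0)/lam)) :=
    tendsto_const_nhds.add ((hu0.add (tendsto_const_nhds.mul hu0)).div hsa hlam')
  have hSden : Tendsto (fun u : ℝ => lam * Real.exp (u * tP) + k*u)
      (nhdsWithin (0:ℝ) (Ioi 0)) (nhds (lam * 1 + k * 0)) :=
    (tendsto_const_nhds.mul hexp).add (tendsto_const_nhds.mul hu0)
  have hS : Tendsto (aoiS k lam tP) (nhdsWithin (0:ℝ) (Ioi 0))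
      (nhds (((k + (0 + k*0)/lam + lam * tP) * 1 - (k + (0 + k*0)/lam) + 0/lam)
        / (lam * 1 + k * 0))) := by
    unfold aoiS
    exact (((hlten.add tendsto_const_nhds).mul hexp).sub hlten |>.add (hu0.div hsa hlam')).div
      hSden (by simpa using hlam')
  have htot := Tendsto.atTop_add hfrac hS
  refine htot.congr' ?_
  exact eventuallyEq_of_mem self_mem_nhdsWithin (fun u hu => (aoi_decomp k lam tP hk hlam htP hu).symm)
end

section
/- Fix positive real numbers k, λ and t^P, and for u > 0 set v = k·u, h = 1/u + 1/v, g = 1/λ + u/(v(u+v+λ)) − h, q = 1/(uv) − (v+λ)/(v(u+v+λ)²), and l = v/u + (u+v)/(u+v+λ). Define the average AoI Δ̄(u) = ( h²e^{2u t^P} + (h(g − t^P) − 1/(uv))e^{u t^P} + g/λ + q )/( h e^{u t^P} + g ) + ( (l + λ t^P)e^{u t^P} − l + u/(u+v+λ) )/( λ e^{u t^P} + v ). Then Δ̄(u) tends to +∞ as u tends to +∞. -/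
open Real Filter Set
open Topology

private lemma lin_div_tendsto (a b c d : ℝ) (hc : c ≠ 0) :
    Tendsto (fun u : ℝ => (a * u + b) / (c * u + d)) atTop (𝓝 (a / c)) := by
  have hb : Tendsto (fun u : ℝ => b / u) atTop (𝓝 0) :=
    tendsto_const_nhds.div_atTop tendsto_id
  have hd : Tendsto (fun u : ℝ => d / u) atTop (𝓝 0) :=
    tendsto_const_nhds.div_atTop tendsto_id
  have h1 : Tendsto (fun u : ℝ => (a + b / u) / (c + d / u)) atTop (𝓝 ((a + 0) / (c + 0))) :=
    (tendsto_const_nhds.add hb).div (tendsto_const_nhds.add hd) (by simpa using hc)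
  rw [add_zero, add_zero] at h1
  refine h1.congr' ?_
  filter_upwards [eventually_gt_atTop 0] with u hu
  have hu' : u ≠ 0 := hu.ne'
  rcases eq_or_ne (c * u + d) 0 with h0 | h0
  · have hcd : c + d / u = (c * u + d) / u := by
      rw [add_div, mul_div_cancel_right₀ _ hu']
    rw [hcd, h0]
    simp
  · field_simp

theorem statement8 (k lam tP : ℝ) (hk : 0 < k) (hlam : 0 < lam) (htP : 0 < tP) :
    Tendsto (aoiBarU k lam tP) atTop atTop := by
  have hk' : k ≠ 0 := hk.ne'
  have hlam' : lam ≠ 0 := hlam.ne'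
  set E : ℝ → ℝ := fun u => Real.exp (u * tP) with hEdef
  set hF : ℝ → ℝ := fun u => 1 / u + 1 / (k * u) with hhF
  set gF : ℝ → ℝ := fun u =>
    1 / lam + u / ((k * u) * (u + k * u + lam)) - hF u with hgF
  set qF : ℝ → ℝ := fun u =>
    1 / (u * (k * u)) - (k * u + lam) / ((k * u) * (u + k * u + lam) ^ 2) with hqF
  set lF : ℝ → ℝ := fun u => (k * u) / u + (u + k * u) / (u + k * u + lam) with hlF
  -- basic limits
  have hU : Tendsto (fun u : ℝ => u) atTop atTop := tendsto_id
  have hUt : Tendsto (fun u : ℝ => u * tP) atTop atTop := hU.atTop_mul_const htP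
  have hEat : Tendsto E atTop atTop := Real.tendsto_exp_atTop.comp hUt
  have hS : Tendsto (fun u : ℝ => u + k * u + lam) atTop atTop :=
    (Tendsto.atTop_add_atTop hU (hU.const_mul_atTop hk)).atTop_add tendsto_const_nhds
  have hinvS : Tendsto (fun u : ℝ => 1 / (u + k * u + lam)) atTop (𝓝 0) :=
    tendsto_const_nhds.div_atTop hS
  have hinvU : Tendsto (fun u : ℝ => 1 / u) atTop (𝓝 0) :=
    tendsto_const_nhds.div_atTop hU
  have hinvKU : Tendsto (fun u : ℝ => 1 / (k * u)) atTop (𝓝 0) :=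
    tendsto_const_nhds.div_atTop (hU.const_mul_atTop hk)
  have hFlim : Tendsto hF atTop (𝓝 0) := by
    have h := hinvU.add hinvKU
    rw [hhF]
    simpa using h
  -- middle term of g
  have hgmid : Tendsto (fun u : ℝ => u / ((k * u) * (u + k * u + lam))) atTop (𝓝 0) := by
    have h1 : Tendsto (fun u : ℝ => 1 / (k * (u + k * u + lam))) atTop (𝓝 0) :=
      tendsto_const_nhds.div_atTop (hS.const_mul_atTop hk)
    refine h1.congr' ?_
    filter_upwards [eventually_gt_atTop 0] with u hu
    have h2 : u + k * u + lam > 0 := by positivity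
    field_simp
  have hglim : Tendsto gF atTop (𝓝 (1 / lam)) := by
    have h := ((tendsto_const_nhds (x := 1 / lam)).add hgmid).sub hFlim
    rw [hgF]
    simpa using h
  -- q limit
  have hq2 : Tendsto (fun u : ℝ => (k * u + lam) / ((k * u) * (u + k * u + lam) ^ 2))
      atTop (𝓝 0) := by
    have h1 : Tendsto (fun u : ℝ => (k * u + lam) / ((1 + k) * u + lam)) atTop
        (𝓝 (k / (1 + k))) := lin_div_tendsto k lam (1 + k) lam (by positivity)
    have h2 : Tendsto (fun u : ℝ => 1 / ((k * u) * (u + k * u + lam))) atTop (𝓝 0) :=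
      tendsto_const_nhds.div_atTop ((hU.const_mul_atTop hk).atTop_mul_atTop₀ hS)
    have h3 := h1.mul h2
    rw [mul_zero] at h3
    refine h3.congr ?_
    intro u
    rw [div_mul_div_comm, mul_one]
    congr 1 <;> ring
  have hqlim : Tendsto qF atTop (𝓝 0) := by
    have h1 : Tendsto (fun u : ℝ => 1 / (u * (k * u))) atTop (𝓝 0) :=
      tendsto_const_nhds.div_atTop (hU.atTop_mul_atTop₀ (hU.const_mul_atTop hk))
    have h := h1.sub hq2
    rw [hqF]
    simpa using h
  -- l limit
  have hllim : Tendsto lF atTop (𝓝 (k + 1)) := by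
    have h1 : Tendsto (fun u : ℝ => ((1 + k) * u + 0) / ((1 + k) * u + lam)) atTop
        (𝓝 ((1 + k) / (1 + k))) := lin_div_tendsto (1 + k) 0 (1 + k) lam (by positivity)
    rw [div_self (by positivity : (1 + k : ℝ) ≠ 0)] at h1
    have h2 : Tendsto (fun u : ℝ => k + ((1 + k) * u + 0) / ((1 + k) * u + lam)) atTop
        (𝓝 (k + 1)) := tendsto_const_nhds.add h1
    refine h2.congr' ?_
    filter_upwards [eventually_gt_atTop 0] with u hu
    simp only [hlF]
    have hku : k * u / u = k := by field_simp
    rw [hku, add_zero]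
    congr 2 <;> ring
  -- u/(u+k*u+lam) limit
  have huS : Tendsto (fun u : ℝ => u / (u + k * u + lam)) atTop (𝓝 (1 / (1 + k))) := by
    have h1 := lin_div_tendsto 1 0 (1 + k) lam (by positivity : (1 + k : ℝ) ≠ 0)
    refine h1.congr ?_
    intro u; congr 1 <;> ring
  -- E / u^2 → ∞
  have hEdivU2 : Tendsto (fun u : ℝ => E u / u ^ 2) atTop atTop := by
    have h1 : Tendsto (fun u : ℝ => Real.exp (u * tP) / (u * tP) ^ 2) atTop atTop :=
      (tendsto_exp_div_pow_atTop 2).comp hUt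
    have h2 := h1.const_mul_atTop (show (0:ℝ) < tP ^ 2 by positivity)
    refine h2.congr' ?_
    filter_upwards [eventually_gt_atTop 0] with u hu
    rw [hEdef]
    field_simp
  -- u / E → 0
  have hUdivE : Tendsto (fun u : ℝ => u / E u) atTop (𝓝 0) := by
    have h1 : Tendsto (fun u : ℝ => E u / u) atTop atTop := by
      have h2 := (tendsto_exp_div_pow_atTop 1).comp hUt
      have h3 := h2.const_mul_atTop htP
      refine h3.congr' ?_
      filter_upwards [eventually_gt_atTop 0] with u hu
      rw [hEdef]
      simp only [Function.comp_apply]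
      field_simp
    have h4 := h1.inv_tendsto_atTop
    refine h4.congr ?_
    intro u
    simp [inv_div]
  -- h^2 * E → ∞
  have hh2E : Tendsto (fun u : ℝ => hF u ^ 2 * E u) atTop atTop := by
    have h1 := hEdivU2.const_mul_atTop (show (0:ℝ) < (1 + 1 / k) ^ 2 by positivity)
    refine h1.congr' ?_
    filter_upwards [eventually_gt_atTop 0] with u hu
    rw [hhF]
    field_simp
  -- A/E → ∞
  have hAE : Tendsto (fun u : ℝ =>
      (hF u ^ 2 * Real.exp (2 * u * tP) + (hF u * (gF u - tP) - 1 / (u * (k * u))) * E u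
        + gF u / lam + qF u) / E u) atTop atTop := by
    have hmid : Tendsto (fun u : ℝ => hF u * (gF u - tP) - 1 / (u * (k * u))) atTop
        (𝓝 (0 * (1 / lam - tP) - 0)) := by
      refine (hFlim.mul (hglim.sub tendsto_const_nhds)).sub ?_
      exact tendsto_const_nhds.div_atTop (hU.atTop_mul_atTop₀ (hU.const_mul_atTop hk))
    rw [zero_mul, sub_zero] at hmid
    have htail : Tendsto (fun u : ℝ => (gF u / lam + qF u) / E u) atTop (𝓝 0) :=
      ((hglim.div_const lam).add hqlim).div_atTop hEat
    have h1 : Tendsto (fun u : ℝ => hF u ^ 2 * E u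
        + (hF u * (gF u - tP) - 1 / (u * (k * u))) + (gF u / lam + qF u) / E u)
        atTop atTop := (hh2E.atTop_add hmid).atTop_add htail
    refine h1.congr ?_
    intro u
    have hEne : E u ≠ 0 := (Real.exp_pos _).ne'
    have hexp2 : Real.exp (2 * u * tP) = E u * E u := by
      rw [hEdef]; rw [← Real.exp_add]; ring_nf
    rw [hexp2]
    field_simp
    ring
  -- E / B → ∞
  have hBoverE : Tendsto (fun u : ℝ => (hF u * E u + gF u) / E u) atTop (𝓝 0) := by
    have h1 : Tendsto (fun u : ℝ => hF u + gF u / E u) atTop (𝓝 (0 + 0)) :=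
      hFlim.add (hglim.div_atTop hEat)
    rw [add_zero] at h1
    refine h1.congr ?_
    intro u
    have hEne : E u ≠ 0 := (Real.exp_pos _).ne'
    field_simp
  have hgpos : ∀ᶠ u : ℝ in atTop, 0 < gF u :=
    hglim.eventually (eventually_gt_nhds (by positivity))
  have hEoverB : Tendsto (fun u : ℝ => E u / (hF u * E u + gF u)) atTop atTop := by
    have h1 : Tendsto (fun u : ℝ => (hF u * E u + gF u) / E u) atTop (𝓝[>] 0) := by
      refine tendsto_nhdsWithin_of_tendsto_nhds_of_eventually_within _ hBoverE ?_
      filter_upwards [eventually_gt_atTop 0, hgpos] with u hu hg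
      have hh : 0 < hF u := by rw [hhF]; positivity
      have : 0 < hF u * E u + gF u := by positivity
      exact div_pos this (Real.exp_pos _)
    have h2 := h1.inv_tendsto_nhdsGT_zero
    refine h2.congr ?_
    intro u
    simp [inv_div]
  -- first term → ∞
  have hT1 : Tendsto (fun u : ℝ =>
      (hF u ^ 2 * Real.exp (2 * u * tP) + (hF u * (gF u - tP) - 1 / (u * (k * u))) * E u
        + gF u / lam + qF u) / (hF u * E u + gF u)) atTop atTop := by
    have h1 := hAE.atTop_mul_atTop₀ hEoverB
    refine h1.congr ?_
    intro u
    have hEne : E u ≠ 0 := (Real.exp_pos _).ne'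
    rcases eq_or_ne (hF u * E u + gF u) 0 with h0 | h0
    · simp [h0]
    · field_simp
  -- second term → finite limit
  have hNE : Tendsto (fun u : ℝ =>
      ((lF u + lam * tP) * E u - lF u + u / (u + k * u + lam)) / E u) atTop
      (𝓝 ((k + 1 + lam * tP) + 0)) := by
    have h1 : Tendsto (fun u : ℝ =>
        (lF u + lam * tP) + (u / (u + k * u + lam) - lF u) / E u) atTop
        (𝓝 ((k + 1 + lam * tP) + 0)) := by
      refine Tendsto.add ?_ ((huS.sub hllim).div_atTop hEat)
      have := hllim.add (tendsto_const_nhds (x := lam * tP))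
      convert this using 2
    refine h1.congr ?_
    intro u
    have hEne : E u ≠ 0 := (Real.exp_pos _).ne'
    field_simp
    ring
  have hDE : Tendsto (fun u : ℝ => (lam * E u + k * u) / E u) atTop (𝓝 (lam + 0)) := by
    have h1 : Tendsto (fun u : ℝ => lam + k * (u / E u)) atTop (𝓝 (lam + k * 0)) :=
      tendsto_const_nhds.add (hUdivE.const_mul k)
    rw [mul_zero] at h1
    refine h1.congr ?_
    intro u
    have hEne : E u ≠ 0 := (Real.exp_pos _).ne'
    field_simp
  have hT2 : Tendsto (fun u : ℝ =>
      ((lF u + lam * tP) * E u - lF u + u / (u + k * u + lam)) / (lam * E u + k * u))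
      atTop (𝓝 ((k + 1 + lam * tP + 0) / (lam + 0))) := by
    have h1 := hNE.div hDE (by rw [add_zero]; exact hlam')
    refine h1.congr ?_
    intro u
    have hEne : E u ≠ 0 := (Real.exp_pos _).ne'
    rcases eq_or_ne (lam * E u + k * u) 0 with h0 | h0
    · simp [h0]
    · simp only [Pi.div_apply]
      field_simp
  -- combine
  have hfinal := hT1.atTop_add hT2
  refine hfinal.congr ?_
  intro u
  simp only [aoiBarU, hEdef, hhF, hgF, hqF, hlF]
end

section
/- Let a and b be positive real numbers and define f(x) = (e^{ax} − 1)(e^{b/x} − 1) for x > 0. Then f is convex on the open interval (0, √(b/a)); indeed its second derivative is strictly positive on (0, √(b/a)). -/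
open Real Set

noncomputable def FF (a b : ℝ) : ℝ → ℝ := fun x => (exp (a*x) - 1) * (exp (b/x) - 1)

noncomputable def F1 (a b : ℝ) : ℝ → ℝ := fun x =>
  (exp (a*x) * a) * (exp (b/x) - 1) + (exp (a*x) - 1) * (exp (b/x) * (-(b/x^2)))

lemma hd_ax (a x : ℝ) : HasDerivAt (fun y : ℝ => a*y) a x := by
  simpa using (hasDerivAt_id x).const_mul a

lemma hd_bdiv (b x : ℝ) (hx : x ≠ 0) : HasDerivAt (fun y : ℝ => b/y) (-(b/x^2)) x := by
  have := (hasDerivAt_inv hx).const_mul b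
  simpa [div_eq_mul_inv, neg_mul, mul_neg] using this

lemma hasDerivAt_FF (a b x : ℝ) (hx : x ≠ 0) : HasDerivAt (FF a b) (F1 a b x) x := by
  have hE : HasDerivAt (fun y : ℝ => exp (a*y) - 1) (exp (a*x) * a) x :=
    ((hd_ax a x).exp).sub_const 1
  have hF : HasDerivAt (fun y : ℝ => exp (b/y) - 1) (exp (b/x) * (-(b/x^2))) x :=
    ((hd_bdiv b x hx).exp).sub_const 1
  exact hE.mul hF

noncomputable def F2 (a b : ℝ) : ℝ → ℝ := fun x =>
  ((exp (a*x) * a * a) * (exp (b/x) - 1) + (exp (a*x) * a) * (exp (b/x) * (-(b/x^2))))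
  + ((exp (a*x) * a) * (exp (b/x) * (-(b/x^2)))
     + (exp (a*x) - 1) * ((exp (b/x) * (-(b/x^2))) * (-(b/x^2)) + exp (b/x) * (b*(2*x/(x^2)^2))))

lemma hasDerivAt_F1 (a b x : ℝ) (hx : x ≠ 0) : HasDerivAt (F1 a b) (F2 a b x) x := by
  have hE : HasDerivAt (fun y : ℝ => exp (a*y) - 1) (exp (a*x) * a) x :=
    ((hd_ax a x).exp).sub_const 1
  have hF : HasDerivAt (fun y : ℝ => exp (b/y) - 1) (exp (b/x) * (-(b/x^2))) x :=
    ((hd_bdiv b x hx).exp).sub_const 1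
  have hEa : HasDerivAt (fun y : ℝ => exp (a*y) * a) (exp (a*x) * a * a) x :=
    ((hd_ax a x).exp).mul_const a
  have hg : HasDerivAt (fun y : ℝ => -(b/y^2)) (b*(2*x/(x^2)^2)) x := by
    have h2 : HasDerivAt (fun y : ℝ => y^2) (2*x) x := by
      simpa using hasDerivAt_pow 2 x
    have := ((h2.inv (pow_ne_zero 2 hx)).const_mul b).neg
    simpa [Pi.neg_def, div_eq_mul_inv, neg_mul, mul_neg, neg_neg, mul_div_assoc] using this
  have hFg : HasDerivAt (fun y : ℝ => exp (b/y) * (-(b/y^2)))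
      ((exp (b/x) * (-(b/x^2))) * (-(b/x^2)) + exp (b/x) * (b*(2*x/(x^2)^2))) x :=
    ((hd_bdiv b x hx).exp).mul hg
  exact (hEa.mul hF).add (hE.mul hFg)

lemma key_ineq (u v E F : ℝ) (hu : 0 < u) (huv : u < v)
    (hE : 1 + u < E) (hF : 1 + v < F) :
    2*u*v*E*F < u^2*E*(F-1) + (v^2+2*v)*(E-1)*F := by
  have hv : 0 < v := hu.trans huv
  have hE0 : (0:ℝ) < E := by linarith
  have hF0 : (0:ℝ) < F := by linarith
  set G : ℝ := u^2*E*(F-1) + (v^2+2*v)*(E-1)*F - 2*u*v*E*F with hG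
  have hid : (1+u)*(1+v)*G =
      (1+u)*(u^2*E)*(F-1-v) + (1+v)*((v^2+2*v)*F)*(E-1-u)
        + (u*v*E*F)*((v-u)^2+(v-u)) := by rw [hG]; ring
  have hpos : 0 < (1+u)*(1+v)*G := by
    rw [hid]
    have t1 : 0 < (1+u)*(u^2*E)*(F-1-v) := mul_pos (by positivity) (by linarith)
    have t2 : 0 < (1+v)*((v^2+2*v)*F)*(E-1-u) := mul_pos (by positivity) (by linarith)
    have t3 : 0 < (u*v*E*F)*((v-u)^2+(v-u)) := by
      apply mul_pos (by positivity)
      nlinarith [sq_nonneg (v-u)]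
    linarith
  have hc : (0:ℝ) < (1+u)*(1+v) := by positivity
  nlinarith [hpos, hc]

lemma F2_pos (a b x : ℝ) (ha : 0 < a) (hb : 0 < b) (hx : 0 < x)
    (hxs : x < Real.sqrt (b/a)) : 0 < F2 a b x := by
  have hx2 : x^2 < b/a := (Real.lt_sqrt hx.le).mp hxs
  have huv : a*x < b/x := by
    rw [lt_div_iff₀ hx]
    nlinarith [(lt_div_iff₀ ha).mp hx2]
  have hu : 0 < a*x := mul_pos ha hx
  have hv : 0 < b/x := div_pos hb hx
  have hE : 1 + a*x < exp (a*x) := by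
    have := Real.add_one_lt_exp hu.ne'
    linarith
  have hF : 1 + b/x < exp (b/x) := by
    have := Real.add_one_lt_exp hv.ne'
    linarith
  have key := key_ineq (a*x) (b/x) (exp (a*x)) (exp (b/x)) hu huv hE hF
  set E := exp (a*x) with hEdef
  set F := exp (b/x) with hFdef
  have heq : F2 a b x =
      ((a*x)^2*E*(F-1) + ((b/x)^2+2*(b/x))*(E-1)*F - 2*(a*x)*(b/x)*E*F)/x^2 := by
    show ((E * a * a) * (F - 1) + (E * a) * (F * (-(b/x^2))))
      + ((E * a) * (F * (-(b/x^2)))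
         + (E - 1) * ((F * (-(b/x^2))) * (-(b/x^2)) + F * (b*(2*x/(x^2)^2)))) = _
    field_simp
    ring
  rw [heq]
  exact div_pos (by linarith) (by positivity)

theorem statement13 (a b : ℝ) (ha : 0 < a) (hb : 0 < b) :
    ConvexOn ℝ (Ioo 0 (Real.sqrt (b / a)))
      (fun x : ℝ => (Real.exp (a * x) - 1) * (Real.exp (b / x) - 1)) ∧
    ∀ x ∈ Ioo (0:ℝ) (Real.sqrt (b / a)),
      0 < iteratedDeriv 2
        (fun x : ℝ => (Real.exp (a * x) - 1) * (Real.exp (b / x) - 1)) x := by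
  have hcont : ContinuousOn (FF a b) (Ioo 0 (Real.sqrt (b/a))) := by
    apply ContinuousOn.mul
    · exact ((Real.continuous_exp.comp (continuous_const.mul continuous_id)).continuousOn).sub
        continuousOn_const
    · exact (Real.continuous_exp.comp_continuousOn
        (continuousOn_const.div continuousOn_id (fun y hy => ne_of_gt hy.1))).sub
        continuousOn_const
  have hpos : ∀ x ∈ Ioo (0:ℝ) (Real.sqrt (b/a)), 0 < deriv^[2] (FF a b) x := by
    intro x hx
    have e1 : deriv (FF a b) =ᶠ[nhds x] F1 a b := by
      filter_upwards [IsOpen.mem_nhds isOpen_Ioi hx.1] with y hy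
      exact (hasDerivAt_FF a b y (ne_of_gt hy)).deriv
    have h2 : deriv^[2] (FF a b) x = deriv (deriv (FF a b)) x := rfl
    rw [h2, e1.deriv_eq, (hasDerivAt_F1 a b x (ne_of_gt hx.1)).deriv]
    exact F2_pos a b x ha hb hx.1 hx.2
  constructor
  · exact (strictConvexOn_of_deriv2_pos (convex_Ioo _ _) hcont
      (fun x hx => hpos x (by rwa [interior_Ioo] at hx))).convexOn
  · intro x hx
    have : iteratedDeriv 2 (FF a b) x = deriv^[2] (FF a b) x := by
      rw [iteratedDeriv_eq_iterate]
    exact this ▸ hpos x hx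
end

section
/- Let a and b be positive real numbers and define f(x) = (e^{ax} − 1)(e^{b/x} − 1) for x > 0. Then f is strictly monotonically increasing on the interval [√(b/a), +∞); indeed its first derivative f'(x) = e^{ax + b/x}·(a − b/x² − a e^{-b/x} + (b/x²)e^{-ax}) vanishes at x = √(b/a) and is strictly positive for x > √(b/a). -/
open Real Set

private lemma aux_anti : StrictAntiOn (fun t : ℝ => (1 - Real.exp (-t)) / t) (Ioi 0) := by
  have hderiv : ∀ t : ℝ, 0 < t →
      HasDerivAt (fun t : ℝ => (1 - Real.exp (-t)) / t)
        ((Real.exp (-t) * t - (1 - Real.exp (-t)) * 1) / t ^ 2) t := by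
    intro t ht
    have h1 : HasDerivAt (fun t : ℝ => Real.exp (-t)) (Real.exp (-t) * (-1)) t :=
      (hasDerivAt_neg t).exp
    have h2 : HasDerivAt (fun t : ℝ => 1 - Real.exp (-t)) (Real.exp (-t)) t := by
      have := h1.const_sub 1
      simpa using this
    exact h2.div (hasDerivAt_id t) ht.ne'
  apply strictAntiOn_of_deriv_neg (convex_Ioi 0)
  · exact fun t ht => (hderiv t ht).differentiableAt.continuousAt.continuousWithinAt
  · intro t ht
    rw [interior_Ioi] at ht
    rw [(hderiv t ht).deriv]
    have key : Real.exp (-t) * t - (1 - Real.exp (-t)) * 1 < 0 := by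
      have h := Real.add_one_lt_exp (x := t) ht.ne'
      have hE : 0 < Real.exp (-t) := Real.exp_pos _
      have : (t + 1) * Real.exp (-t) < Real.exp t * Real.exp (-t) :=
        mul_lt_mul_of_pos_right h hE
      rw [← Real.exp_add] at this
      simp at this
      nlinarith
    exact div_neg_of_neg_of_pos key (pow_pos ht 2)

theorem statement14 (a b : ℝ) (ha : 0 < a) (hb : 0 < b) :
    StrictMonoOn (fun x : ℝ => (Real.exp (a * x) - 1) * (Real.exp (b / x) - 1))
      (Ici (Real.sqrt (b / a))) ∧
    (∀ x : ℝ, 0 < x →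
      deriv (fun x : ℝ => (Real.exp (a * x) - 1) * (Real.exp (b / x) - 1)) x
        = Real.exp (a * x + b / x)
          * (a - b / x ^ 2 - a * Real.exp (-(b / x)) + (b / x ^ 2) * Real.exp (-(a * x)))) ∧
    deriv (fun x : ℝ => (Real.exp (a * x) - 1) * (Real.exp (b / x) - 1))
      (Real.sqrt (b / a)) = 0 ∧
    ∀ x : ℝ, Real.sqrt (b / a) < x →
      0 < deriv (fun x : ℝ => (Real.exp (a * x) - 1) * (Real.exp (b / x) - 1)) x := by
  set s := Real.sqrt (b / a) with hs
  have hba : 0 < b / a := div_pos hb ha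
  have hspos : 0 < s := Real.sqrt_pos.2 hba
  have hs2 : s ^ 2 = b / a := Real.sq_sqrt hba.le
  -- derivative computation
  have hder : ∀ x : ℝ, 0 < x →
      HasDerivAt (fun x : ℝ => (Real.exp (a * x) - 1) * (Real.exp (b / x) - 1))
        (Real.exp (a * x + b / x)
          * (a - b / x ^ 2 - a * Real.exp (-(b / x)) + (b / x ^ 2) * Real.exp (-(a * x)))) x := by
    intro x hx
    have h1 : HasDerivAt (fun x : ℝ => Real.exp (a * x) - 1) (a * Real.exp (a * x)) x := by
      have := (((hasDerivAt_id x).const_mul a).exp).sub_const 1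
      simpa [mul_comm] using this
    have hinv : HasDerivAt (fun x : ℝ => b / x) (-(b / x ^ 2)) x := by
      have := (hasDerivAt_inv hx.ne').const_mul b
      simpa [div_eq_mul_inv, neg_div, mul_div_assoc] using this
    have h2 : HasDerivAt (fun x : ℝ => Real.exp (b / x) - 1)
        (Real.exp (b / x) * (-(b / x ^ 2))) x := (hinv.exp).sub_const 1
    have h := h1.mul h2
    refine h.congr_deriv ?_
    have hP : Real.exp (a * x) ≠ 0 := (Real.exp_pos _).ne'
    have hQ : Real.exp (b / x) ≠ 0 := (Real.exp_pos _).ne'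
    rw [Real.exp_add, Real.exp_neg, Real.exp_neg]
    field_simp
    ring
  -- positivity of the bracket for x > s
  have hbracket : ∀ x : ℝ, s < x →
      0 < a - b / x ^ 2 - a * Real.exp (-(b / x)) + (b / x ^ 2) * Real.exp (-(a * x)) := by
    intro x hx
    have hxpos : 0 < x := hspos.trans hx
    set u := b / x with hu
    set v := a * x with hv
    have hupos : 0 < u := div_pos hb hxpos
    have hvpos : 0 < v := mul_pos ha hxpos
    have huv : u < v := by
      rw [hu, hv, div_lt_iff₀ hxpos]
      have : s ^ 2 < x ^ 2 := by nlinarith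
      rw [hs2, div_lt_iff₀ ha] at this
      nlinarith
    have hanti := aux_anti (mem_Ioi.2 hupos) (mem_Ioi.2 hvpos) huv
    simp only at hanti
    -- (1 - e^{-v})/v < (1 - e^{-u})/u
    have hineq : u * (1 - Real.exp (-v)) < v * (1 - Real.exp (-u)) := by
      rw [div_lt_div_iff₀ hvpos hupos] at hanti
      nlinarith
    have key : x * (a - b / x ^ 2 - a * Real.exp (-(b / x)) + (b / x ^ 2) * Real.exp (-(a * x)))
        = v * (1 - Real.exp (-u)) - u * (1 - Real.exp (-v)) := by
      rw [hu, hv]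
      field_simp
      ring
    have h2 : 0 < x * (a - b / x ^ 2 - a * Real.exp (-(b / x)) + (b / x ^ 2) * Real.exp (-(a * x))) := by
      rw [key]; linarith
    by_contra h
    push_neg at h
    nlinarith
  -- the four parts
  have part2 : ∀ x : ℝ, 0 < x →
      deriv (fun x : ℝ => (Real.exp (a * x) - 1) * (Real.exp (b / x) - 1)) x
        = Real.exp (a * x + b / x)
          * (a - b / x ^ 2 - a * Real.exp (-(b / x)) + (b / x ^ 2) * Real.exp (-(a * x))) :=
    fun x hx => (hder x hx).deriv
  have part4 : ∀ x : ℝ, s < x →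
      0 < deriv (fun x : ℝ => (Real.exp (a * x) - 1) * (Real.exp (b / x) - 1)) x := by
    intro x hx
    rw [part2 x (hspos.trans hx)]
    exact mul_pos (Real.exp_pos _) (hbracket x hx)
  refine ⟨?_, part2, ?_, part4⟩
  · apply strictMonoOn_of_deriv_pos (convex_Ici s)
    · exact fun x hx => (hder x (hspos.trans_le hx)).differentiableAt.continuousAt.continuousWithinAt
    · intro x hx
      rw [interior_Ici] at hx
      exact part4 x hx
  · rw [part2 s hspos]
    have e1 : b / s ^ 2 = a := by
      rw [hs2]
      field_simp
    have e2 : b / s = a * s := by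
      have : b = a * s ^ 2 := by rw [hs2]; field_simp
      rw [this]; field_simp
    rw [e1, e2]
    ring
end

section
/- Let u, v, λ be positive real numbers and set l = v/u + (u+v)/(u+v+λ). Define for t > 0 the function S̄(t) = ( (l + λt)e^{ut} − l + u/(u+v+λ) )/( λe^{ut} + v ). Then S̄ is strictly monotonically increasing on (0, +∞). -/
open Real Set

noncomputable def sBarT (u v lam : ℝ) (t : ℝ) : ℝ :=
  let l := v / u + (u + v) / (u + v + lam)
  ((l + lam * t) * Real.exp (u * t) - l + u / (u + v + lam))
    / (lam * Real.exp (u * t) + v)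

theorem statement17 (u v lam : ℝ) (hu : 0 < u) (hv : 0 < v) (hlam : 0 < lam) :
    StrictMonoOn (sBarT u v lam) (Ioi 0) := by
  set l : ℝ := v / u + (u + v) / (u + v + lam) with hl
  have hs : 0 < u + v + lam := by linarith
  have hl_lb : u / (u + v + lam) < l := by
    have h1 : 0 < v / u := by positivity
    have h2 : u / (u + v + lam) < (u + v) / (u + v + lam) := by gcongr; linarith
    rw [hl]; linarith
  have hl_pos : 0 < l := lt_trans (by positivity) hl_lb
  -- derivative
  have key : ∀ t : ℝ, HasDerivAt (sBarT u v lam)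
      (((lam * Real.exp (u * t) + (l + lam * t) * (Real.exp (u * t) * u)) *
          (lam * Real.exp (u * t) + v) -
        ((l + lam * t) * Real.exp (u * t) - l + u / (u + v + lam)) *
          (lam * (Real.exp (u * t) * u))) /
        (lam * Real.exp (u * t) + v) ^ 2) t := by
    intro t
    have hden : lam * Real.exp (u * t) + v ≠ 0 := by positivity
    have hexp : HasDerivAt (fun t : ℝ => Real.exp (u * t)) (Real.exp (u * t) * u) t := by
      simpa using (HasDerivAt.exp ((hasDerivAt_id t).const_mul u))
    have hnum : HasDerivAt
        (fun t : ℝ => (l + lam * t) * Real.exp (u * t) - l + u / (u + v + lam))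
        (lam * Real.exp (u * t) + (l + lam * t) * (Real.exp (u * t) * u)) t := by
      have h1 : HasDerivAt (fun t : ℝ => l + lam * t) lam t := by
        simpa using ((hasDerivAt_id t).const_mul lam).const_add l
      have := (h1.mul hexp).sub_const l |>.add_const (u / (u + v + lam))
      simpa [mul_comm] using this
    have hden' : HasDerivAt (fun t : ℝ => lam * Real.exp (u * t) + v)
        (lam * (Real.exp (u * t) * u)) t := by
      simpa using (hexp.const_mul lam).add_const v
    have := hnum.div hden' hden
    exact this
  have hderiv_pos : ∀ t ∈ interior (Ioi (0:ℝ)), 0 < deriv (sBarT u v lam) t := by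
    intro t ht
    rw [interior_Ioi, mem_Ioi] at ht
    rw [(key t).deriv]
    set E := Real.exp (u * t) with hE
    have hEpos : 0 < E := Real.exp_pos _
    have hdenpos : 0 < lam * E + v := by positivity
    apply div_pos _ (by positivity)
    have heq : (lam * E + (l + lam * t) * (E * u)) * (lam * E + v) -
        ((l + lam * t) * E - l + u / (u + v + lam)) * (lam * (E * u)) =
        E * (lam ^ 2 * E + lam * v + u * v * l + u * v * lam * t +
          lam * u * (l - u / (u + v + lam))) := by ring
    rw [heq]
    have h3 : 0 < lam * u * (l - u / (u + v + lam)) := by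
      apply mul_pos (by positivity); linarith
    have h4 : 0 < u * v * lam * t := by positivity
    have h5 : 0 < lam ^ 2 * E := by positivity
    have h6 : 0 < lam * v := by positivity
    have h7 : 0 < u * v * l := by positivity
    apply mul_pos hEpos
    clear_value l E
    linarith
  exact strictMonoOn_of_deriv_pos (convex_Ioi 0)
    (fun x _ => (key x).continuousAt.continuousWithinAt) hderiv_pos
end
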